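/- Let n ≥ 2, d ≥ 1, and let q ∈ ℝ[x₁,…,xₙ] be homogeneous of degree d−1 with exactly one monomial having negative coefficient (signature pair (P,1)). Suppose every coefficient of s·q = (x₁+⋯+xₙ)·q is nonnegative. Then the rank satisfies ρ(s·q) ≥ n(n+1)/2 − 1; in particular ρ(s·q) ≥ (k₀+1)n − k₀(k₀+1)/2, where k₀ is the largest integer k ≥ 0 with k(k+1)/2 < n−1. -/

import Mathlib

open MvPolynomial


lemma card_pairs (n : ℕ) :
    (Finset.univ.filter (fun p : Fin n × Fin n => p.1 ≤ p.2)).card = n * (n + 1) / 2 := by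
  classical
  rw [Finset.card_eq_sum_card_fiberwise (f := Prod.snd) (t := Finset.univ)
      (fun x _ => Finset.mem_univ _)]
  have hfib : ∀ k : Fin n,
      ((Finset.univ.filter (fun p : Fin n × Fin n => p.1 ≤ p.2)).filter
        (fun p => p.2 = k)) = Finset.Iic k ×ˢ {k} := by
    intro k
    ext p
    simp only [Finset.mem_filter, Finset.mem_univ, true_and, Finset.mem_product,
      Finset.mem_Iic, Finset.mem_singleton]
    constructor
    · rintro ⟨h1, rfl⟩; exact ⟨h1, rfl⟩
    · rintro ⟨h1, rfl⟩; exact ⟨h1, rfl⟩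
  simp only [hfib, Finset.card_product, Finset.card_singleton, mul_one, Fin.card_Iic]
  have h1 : ∑ k : Fin n, ((k : ℕ) + 1) = ∑ i ∈ Finset.range n, (i + 1) :=
    Fin.sum_univ_eq_sum_range _ n
  have h2 : ∑ i ∈ Finset.range (n + 1), (id i) = (∑ i ∈ Finset.range n, id (i + 1)) + id 0 :=
    Finset.sum_range_succ' id n
  simp only [id] at h2
  have h3 := Finset.sum_range_id_mul_two (n + 1)
  have h4 : (n + 1) * (n + 1 - 1) = n * (n + 1) := by rw [Nat.add_sub_cancel]; ring
  omega



lemma comb_bound {n : ℕ} (A : Fin n → Finset (Fin n))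
    (hne : ∀ i, (A i).Nonempty) (hni : ∀ i, i ∉ A i) :
    (Finset.univ.filter (fun p : Fin n × Fin n => p.1 ≤ p.2)).card - 1 ≤
      ∑ p ∈ Finset.univ.filter (fun p : Fin n × Fin n => p.1 ≤ p.2),
        ((A p.1 ∪ A p.2) \ {p.1, p.2}).card := by
  classical
  set P := Finset.univ.filter (fun p : Fin n × Fin n => p.1 ≤ p.2) with hP
  set f : Fin n × Fin n → ℕ := fun p => ((A p.1 ∪ A p.2) \ {p.1, p.2}).card with hf
  set Bad := P.filter (fun p => f p = 0) with hBad
  have hBadsub : Bad ⊆ P := Finset.filter_subset _ _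
  have hgood : ∀ p ∈ P, p ∉ Bad → 1 ≤ f p := by
    intro p hp hpb
    rcases Nat.eq_zero_or_pos (f p) with h | h
    · exact absurd (Finset.mem_filter.2 ⟨hp, h⟩) hpb
    · exact h
  have key : ∀ a b : Fin n, A a ⊆ {a, b} → A a = {b} := by
    intro a b hsub
    apply Finset.eq_singleton_iff_unique_mem.2
    have hmem : ∀ x ∈ A a, x = b := by
      intro x hx
      rcases Finset.mem_insert.1 (hsub hx) with h | h
      · exact absurd (h ▸ hx) (hni a)
      · exact Finset.mem_singleton.1 h
    obtain ⟨x, hx⟩ := hne a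
    exact ⟨(hmem x hx) ▸ hx, hmem⟩
  have hbadspec : ∀ p ∈ Bad, A p.1 = {p.2} ∧ A p.2 = {p.1} ∧ p.1 ≠ p.2 := by
    intro p hp
    obtain ⟨hpP, hp0⟩ := Finset.mem_filter.1 hp
    have hsub : A p.1 ∪ A p.2 ⊆ {p.1, p.2} := by
      intro x hx
      by_contra hx2
      have hmem : x ∈ (A p.1 ∪ A p.2) \ {p.1, p.2} := Finset.mem_sdiff.2 ⟨hx, hx2⟩
      have hpos : 0 < f p := Finset.card_pos.2 ⟨x, hmem⟩
      omega
    have h1 : A p.1 = {p.2} :=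
      key p.1 p.2 (fun x hx => hsub (Finset.mem_union_left _ hx))
    have h2 : A p.2 = {p.1} := by
      apply key p.2 p.1
      intro x hx
      have := hsub (Finset.mem_union_right _ hx)
      rwa [Finset.pair_comm p.1 p.2] at this
    refine ⟨h1, h2, ?_⟩
    intro heq
    apply hni p.2
    have hm : p.2 ∈ A p.1 := h1 ▸ Finset.mem_singleton_self _
    rwa [heq] at hm
  have hdisj : ∀ p ∈ Bad, ∀ p' ∈ Bad, p ≠ p' →
      p.1 ≠ p'.1 ∧ p.1 ≠ p'.2 ∧ p.2 ≠ p'.1 ∧ p.2 ≠ p'.2 := by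
    intro p hp p' hp' hnep
    obtain ⟨h1, h2, h12⟩ := hbadspec p hp
    obtain ⟨h1', h2', h12'⟩ := hbadspec p' hp'
    have hle : (p.1 : ℕ) ≤ (p.2 : ℕ) := (Finset.mem_filter.1 (hBadsub hp)).2
    have hle' : (p'.1 : ℕ) ≤ (p'.2 : ℕ) := (Finset.mem_filter.1 (hBadsub hp')).2
    have hv12 : (p.1 : ℕ) ≠ (p.2 : ℕ) := fun h => h12 (Fin.ext h)
    refine ⟨?_, ?_, ?_, ?_⟩
    · intro h
      apply hnep
      have hs : ({p.2} : Finset (Fin n)) = {p'.2} := by rw [← h1, ← h1', h]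
      exact Prod.ext h (Finset.singleton_injective hs)
    · intro h
      have hs : ({p.2} : Finset (Fin n)) = {p'.1} := by rw [← h1, ← h2', h]
      have h21 : p.2 = p'.1 := Finset.singleton_injective hs
      have v1 : (p.1 : ℕ) = (p'.2 : ℕ) := congrArg Fin.val h
      have v2 : (p.2 : ℕ) = (p'.1 : ℕ) := congrArg Fin.val h21
      omega
    · intro h
      have hs : ({p.1} : Finset (Fin n)) = {p'.2} := by rw [← h2, ← h1', h]
      have h12'' : p.1 = p'.2 := Finset.singleton_injective hs
      have v1 : (p.2 : ℕ) = (p'.1 : ℕ) := congrArg Fin.val h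
      have v2 : (p.1 : ℕ) = (p'.2 : ℕ) := congrArg Fin.val h12''
      omega
    · intro h
      apply hnep
      have hs : ({p.1} : Finset (Fin n)) = {p'.1} := by rw [← h2, ← h2', h]
      exact Prod.ext (Finset.singleton_injective hs) h
  rcases le_or_gt Bad.card 1 with hB | hB
  · have h1 : P.card - Bad.card ≤ (P \ Bad).card := by
      rw [Finset.card_sdiff_of_subset hBadsub]
    have h2 : (P \ Bad).card ≤ ∑ p ∈ P \ Bad, f p := by
      rw [Finset.card_eq_sum_ones]
      exact Finset.sum_le_sum fun p hp => by
        obtain ⟨hp1, hp2⟩ := Finset.mem_sdiff.1 hp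
        exact hgood p hp1 hp2
    have h3 : ∑ p ∈ P \ Bad, f p ≤ ∑ p ∈ P, f p :=
      Finset.sum_le_sum_of_subset (Finset.sdiff_subset)
    have heta : P.sum f = ∑ p ∈ P, f p := rfl
    omega
  · obtain ⟨p₀, hp₀⟩ := Finset.card_pos.1 (by omega : 0 < Bad.card)
    set c : Fin n × Fin n → Fin n × Fin n :=
      fun p => if p.1 ≤ p₀.1 then (p.1, p₀.1) else (p₀.1, p.1) with hc
    set C := (Bad.erase p₀).image c with hC
    have hfirst : ∀ p, (c p).1 = p.1 ∨ (c p).1 = p₀.1 := by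
      intro p; by_cases h : p.1 ≤ p₀.1 <;> simp [hc, h]
    have hpair : ∀ p, ({(c p).1, (c p).2} : Finset (Fin n)) = {p.1, p₀.1} ∧
        (A (c p).1 ∪ A (c p).2) = A p.1 ∪ A p₀.1 := by
      intro p; by_cases h : p.1 ≤ p₀.1
      · simp [hc, h]
      · simp [hc, h, Finset.pair_comm, Finset.union_comm]
    have hCcard : C.card = Bad.card - 1 := by
      rw [hC, Finset.card_image_of_injOn, Finset.card_erase_of_mem hp₀]
      intro p hp p' hp' hcc
      have hpB : p ∈ Bad := Finset.mem_of_mem_erase hp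
      have hp'B : p' ∈ Bad := Finset.mem_of_mem_erase hp'
      have hd := hdisj p hpB p₀ hp₀ (Finset.ne_of_mem_erase hp)
      have hd' := hdisj p' hp'B p₀ hp₀ (Finset.ne_of_mem_erase hp')
      have h11 : p.1 = p'.1 := by
        have hs : ({p.1, p₀.1} : Finset (Fin n)) = {p'.1, p₀.1} := by
          rw [← (hpair p).1, ← (hpair p').1, hcc]
        have hm : p.1 ∈ ({p'.1, p₀.1} : Finset (Fin n)) :=
          hs ▸ Finset.mem_insert_self _ _
        rcases Finset.mem_insert.1 hm with h | h
        · exact h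
        · exact absurd (Finset.mem_singleton.1 h) hd.1
      have hA := (hbadspec p hpB).1
      have hA' := (hbadspec p' hp'B).1
      rw [h11, hA'] at hA
      exact Prod.ext h11 (Finset.singleton_injective hA.symm)
    have hCP : C ⊆ P := by
      intro x hx
      obtain ⟨p, hp, rfl⟩ := Finset.mem_image.1 hx
      rw [hP, Finset.mem_filter]
      refine ⟨Finset.mem_univ _, ?_⟩
      by_cases h : p.1 ≤ p₀.1 <;> simp [hc, h]
      exact le_of_lt (lt_of_not_ge h)
    have hCf : ∀ x ∈ C, f x = 2 := by
      intro x hx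
      obtain ⟨p, hp, rfl⟩ := Finset.mem_image.1 hx
      have hpB : p ∈ Bad := Finset.mem_of_mem_erase hp
      have hd := hdisj p hpB p₀ hp₀ (Finset.ne_of_mem_erase hp)
      have hA := (hbadspec p hpB).1
      have hA₀ := (hbadspec p₀ hp₀).1
      have hne12 := (hbadspec p hpB).2.2
      have hne12' := (hbadspec p₀ hp₀).2.2
      obtain ⟨hps, hAs⟩ := hpair p
      rw [hf]
      simp only [hps, hAs, hA, hA₀]
      have hset : ({p.2} ∪ {p₀.2} : Finset (Fin n)) \ {p.1, p₀.1} = {p.2, p₀.2} := by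
        ext y
        simp only [Finset.mem_sdiff, Finset.mem_union, Finset.mem_singleton,
          Finset.mem_insert]
        constructor
        · rintro ⟨h1, _⟩; exact h1
        · rintro (rfl | rfl)
          · exact ⟨Or.inl rfl, by push_neg; exact ⟨hne12.symm, hd.2.2.1⟩⟩
          · exact ⟨Or.inr rfl, by push_neg; exact ⟨Ne.symm hd.2.1, Ne.symm hne12'⟩⟩
      rw [hset]
      exact Finset.card_pair hd.2.2.2
    have hCBad : Disjoint C Bad := by
      rw [Finset.disjoint_left]
      intro x hx hxB
      have h0 := (Finset.mem_filter.1 hxB).2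
      rw [hCf x hx] at h0
      omega
    have hCsub : C ⊆ P \ Bad := by
      intro x hx
      exact Finset.mem_sdiff.2 ⟨hCP hx, Finset.disjoint_left.1 hCBad hx⟩
    have hsplit : ∑ p ∈ C, f p + ∑ p ∈ (P \ Bad) \ C, f p ≤ ∑ p ∈ P, f p := by
      rw [← Finset.sum_union (Finset.disjoint_sdiff)]
      apply Finset.sum_le_sum_of_subset
      intro x hx
      rcases Finset.mem_union.1 hx with h | h
      · exact hCP h
      · exact Finset.sdiff_subset (Finset.sdiff_subset h)
    have hsC : ∑ p ∈ C, f p = 2 * C.card := by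
      rw [Finset.sum_congr rfl hCf, Finset.sum_const, smul_eq_mul, mul_comm]
    have hsrest : ((P \ Bad) \ C).card ≤ ∑ p ∈ (P \ Bad) \ C, f p := by
      rw [Finset.card_eq_sum_ones]
      apply Finset.sum_le_sum
      intro p hp
      have h1 := Finset.mem_sdiff.1 (Finset.sdiff_subset hp)
      exact hgood p h1.1 h1.2
    have hc1 : (P \ Bad).card = P.card - Bad.card := Finset.card_sdiff_of_subset hBadsub
    have hc2 : ((P \ Bad) \ C).card = (P \ Bad).card - C.card := Finset.card_sdiff_of_subset hCsub
    have hc3 : Bad.card ≤ P.card := Finset.card_le_card hBadsub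
    have hc4 : C.card ≤ (P \ Bad).card := Finset.card_le_card hCsub
    have heta : P.sum f = ∑ p ∈ P, f p := rfl
    omega


/-- **Proposition 3.6: the SOS Conjecture holds for signature pair `(P,1)`
(diagonal case).**  Let `q ∈ ℝ[x₁,…,xₙ]` (`n ≥ 2`) be homogeneous of degree
`d−1` with exactly one monomial of negative coefficient, and suppose every
coefficient of `s·q = (x₁+⋯+xₙ)·q` is nonnegative.  Then the rank satisfies
`ρ(s·q) ≥ n(n+1)/2 − 1`; in particular `ρ(s·q) ≥ (k₀+1)n − k₀(k₀+1)/2`, where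
`k₀` is the largest integer `k ≥ 0` with `k(k+1)/2 < n−1`. -/
theorem sos_one_negative
    {n : ℕ} (hn : 2 ≤ n) {d : ℕ} (hd : 1 ≤ d)
    (k₀ : ℕ) (hk₀ : k₀ * (k₀ + 1) / 2 < n - 1)
    (hk₀max : ∀ k : ℕ, k * (k + 1) / 2 < n - 1 → k ≤ k₀)
    (q : MvPolynomial (Fin n) ℝ)
    (hq : q.IsHomogeneous (d - 1))
    (hone : (q.support.filter fun m => q.coeff m < 0).card = 1)
    (hnonneg : ∀ m : Fin n →₀ ℕ, 0 ≤ ((∑ i, X i) * q).coeff m) :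
    n * (n + 1) / 2 - 1 ≤ ((∑ i, X i) * q).support.card ∧
      (k₀ + 1) * n - k₀ * (k₀ + 1) / 2 ≤ ((∑ i, X i) * q).support.card := by
  classical
  obtain ⟨μ, hμ⟩ := Finset.card_eq_one.mp hone
  have hμmem : μ ∈ q.support.filter fun m => q.coeff m < 0 := by
    rw [hμ]; exact Finset.mem_singleton_self μ
  have hμneg : q.coeff μ < 0 := (Finset.mem_filter.1 hμmem).2
  have huniq : ∀ m, q.coeff m < 0 → m = μ := by
    intro m hm
    have hms : m ∈ q.support := MvPolynomial.mem_support_iff.2 (ne_of_lt hm)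
    have h2 : m ∈ q.support.filter fun m => q.coeff m < 0 := Finset.mem_filter.2 ⟨hms, hm⟩
    rw [hμ] at h2
    exact Finset.mem_singleton.1 h2
  set e : Fin n → (Fin n →₀ ℕ) := fun i => Finsupp.single i 1 with he
  have hcoeff : ∀ m : Fin n →₀ ℕ, ((∑ i, X i) * q).coeff m
      = ∑ i, if m i ≠ 0 then q.coeff (m - e i) else 0 := by
    intro m
    rw [Finset.sum_mul, MvPolynomial.coeff_sum]
    refine Finset.sum_congr rfl fun i _ => ?_
    rw [mul_comm, MvPolynomial.coeff_mul_X']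
    simp [Finsupp.mem_support_iff, he]
  have hμdeg : μ.degree = d - 1 := by
    by_contra h
    exact absurd (hq.coeff_eq_zero h) (ne_of_lt hμneg)
  have hdeg_add : ∀ (ν : Fin n →₀ ℕ) (i : Fin n), (ν + e i).degree = ν.degree + 1 := by
    intro ν i
    simp [he, Finsupp.degree_eq_weight_one, map_add, Finsupp.weight_apply,
      Finsupp.sum_single_index]
  have hcoeff_top : ∀ i : Fin n, q.coeff (μ + e i) = 0 := by
    intro i
    apply hq.coeff_eq_zero
    rw [hdeg_add, hμdeg]
    omega
  set A : Fin n → Finset (Fin n) :=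
    fun i => Finset.univ.filter (fun j => 0 < q.coeff (μ - e j + e i)) with hA
  have hAmem : ∀ i j, j ∈ A i ↔ 0 < q.coeff (μ - e j + e i) := by
    intro i j
    simp [hA]
  have hsub0 : ∀ j : Fin n, μ j = 0 → μ - e j = μ := by
    intro j hj
    ext a
    rcases eq_or_ne j a with rfl | hja
    · simp [he, Finsupp.tsub_apply, hj]
    · simp [he, Finsupp.tsub_apply, Finsupp.single_eq_of_ne' hja]
  have hAval : ∀ i j, j ∈ A i → μ j ≠ 0 ∧ j ≠ i := by
    intro i j hj
    have hpos : 0 < q.coeff (μ - e j + e i) := (hAmem i j).1 hj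
    have hμj : μ j ≠ 0 := by
      intro h0
      rw [hsub0 j h0, hcoeff_top i] at hpos
      exact lt_irrefl 0 hpos
    refine ⟨hμj, ?_⟩
    rintro rfl
    rw [tsub_add_cancel_of_le (Finsupp.single_le_iff.2 (by omega : 1 ≤ μ j))] at hpos
    exact absurd hpos (not_lt.2 (le_of_lt hμneg))
  have hAnot : ∀ i, i ∉ A i := fun i hi => (hAval i i hi).2 rfl
  have hAne : ∀ i, (A i).Nonempty := by
    intro i
    rw [Finset.nonempty_iff_ne_empty]
    intro hAe
    have h0 := hnonneg (μ + e i)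
    rw [hcoeff (μ + e i)] at h0
    have hneg : (∑ j, if (μ + e i) j ≠ 0 then q.coeff (μ + e i - e j) else 0)
        < ∑ _j : Fin n, (0:ℝ) := by
      apply Finset.sum_lt_sum
      · intro j _
        by_cases hj : (μ + e i) j ≠ 0
        · rw [if_pos hj]
          rcases eq_or_ne j i with rfl | hji
          · rw [add_tsub_cancel_right]
            exact le_of_lt hμneg
          · have hμapp : (μ + e i) j = μ j := by
              simp [he, Finsupp.add_apply, Finsupp.single_eq_of_ne' (Ne.symm hji)]
            have hμj : μ j ≠ 0 := by rw [hμapp] at hj; exact hj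
            have heq2 : μ + e i - e j = μ - e j + e i :=
              (tsub_add_eq_add_tsub (Finsupp.single_le_iff.2 (by omega : 1 ≤ μ j))).symm
            rw [heq2]
            by_contra hlt
            push_neg at hlt
            have hjA : j ∈ A i := (hAmem i j).2 hlt
            rw [hAe] at hjA
            exact absurd hjA (Finset.notMem_empty j)
        · rw [if_neg hj]
      · refine ⟨i, Finset.mem_univ _, ?_⟩
        have hji : (μ + e i) i ≠ 0 := by
          simp [he, Finsupp.add_apply, Finsupp.single_eq_same]
        rw [if_pos hji, add_tsub_cancel_right]
        exact hμneg
    rw [Finset.sum_const, smul_zero] at hneg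
    linarith
  -- the map and index set
  set Φ : Fin n × Fin n → Fin n → (Fin n →₀ ℕ) := fun p j => μ - e j + e p.1 + e p.2 with hΦ
  set P := Finset.univ.filter (fun p : Fin n × Fin n => p.1 ≤ p.2) with hP
  have hmem : ∀ p ∈ P, ∀ j ∈ (A p.1 ∪ A p.2) \ {p.1, p.2},
      Φ p j ∈ ((∑ i, X i) * q).support := by
    intro p hp j hj
    obtain ⟨hjU, hjn⟩ := Finset.mem_sdiff.1 hj
    have hjn1 : j ≠ p.1 := fun h => hjn (by simp [h])
    have hjn2 : j ≠ p.2 := fun h => hjn (by simp [h])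
    have hwit : ∃ l : Fin n, ((Φ p j) l ≠ 0) ∧ 0 < q.coeff (Φ p j - e l) ∧ μ j ≠ 0 := by
      rcases Finset.mem_union.1 hjU with hjA | hjA
      · obtain ⟨hμj, _⟩ := hAval _ _ hjA
        refine ⟨p.2, ?_, ?_, hμj⟩
        · have happ : (Φ p j) p.2 = (μ - e j) p.2 + (e p.1) p.2 + 1 := by
            simp [hΦ, he, Finsupp.add_apply, Finsupp.single_eq_same]
          omega
        · simp only [hΦ]
          rw [add_tsub_cancel_right]
          exact (hAmem p.1 j).1 hjA
      · obtain ⟨hμj, _⟩ := hAval _ _ hjA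
        refine ⟨p.1, ?_, ?_, hμj⟩
        · have happ : (Φ p j) p.1 = (μ - e j) p.1 + 1 + (e p.2) p.1 := by
            simp [hΦ, he, Finsupp.add_apply, Finsupp.single_eq_same]
          omega
        · simp only [hΦ]
          rw [add_right_comm, add_tsub_cancel_right]
          exact (hAmem p.2 j).1 hjA
    obtain ⟨l, hl1, hl2, hμj⟩ := hwit
    have hΦj : (Φ p j) j = μ j - 1 := by
      have e1 : (e p.1) j = 0 := by
        simp [he, Finsupp.single_eq_of_ne' (Ne.symm hjn1)]
      have e2 : (e p.2) j = 0 := by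
        simp [he, Finsupp.single_eq_of_ne' (Ne.symm hjn2)]
      have : (Φ p j) j = (μ j - (e j) j) + (e p.1) j + (e p.2) j := by
        simp [hΦ, Finsupp.add_apply, Finsupp.tsub_apply]
      rw [this, e1, e2]
      simp [he, Finsupp.single_eq_same]
    have hall : ∀ t : Fin n, 0 ≤ (if (Φ p j) t ≠ 0 then q.coeff (Φ p j - e t) else 0) := by
      intro t
      by_cases ht : (Φ p j) t ≠ 0
      · rw [if_pos ht]
        by_contra hlt
        push_neg at hlt
        have hμeq : Φ p j - e t = μ := huniq _ hlt
        have h2' : (Φ p j - e t) j ≤ (Φ p j) j := by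
          rw [Finsupp.tsub_apply]
          omega
        rw [hμeq, hΦj] at h2'
        omega
      · rw [if_neg ht]
    have hpos : 0 < ((∑ i, X i) * q).coeff (Φ p j) := by
      rw [hcoeff]
      refine Finset.sum_pos' (fun t _ => hall t) ⟨l, Finset.mem_univ _, ?_⟩
      rw [if_pos hl1]
      exact hl2
    exact MvPolynomial.mem_support_iff.2 (ne_of_gt hpos)
  have hinj : ∀ p ∈ P, ∀ j ∈ (A p.1 ∪ A p.2) \ {p.1, p.2},
      ∀ p' ∈ P, ∀ j' ∈ (A p'.1 ∪ A p'.2) \ {p'.1, p'.2},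
      Φ p j = Φ p' j' → p = p' ∧ j = j' := by
    intro p hp j hj p' hp' j' hj' heq
    have hle : (p.1 : ℕ) ≤ (p.2 : ℕ) := (Finset.mem_filter.1 hp).2
    have hle' : (p'.1 : ℕ) ≤ (p'.2 : ℕ) := (Finset.mem_filter.1 hp').2
    obtain ⟨hjU, hjn⟩ := Finset.mem_sdiff.1 hj
    obtain ⟨hjU', hjn'⟩ := Finset.mem_sdiff.1 hj'
    have hjn1 : j ≠ p.1 := fun h => hjn (by simp [h])
    have hjn2 : j ≠ p.2 := fun h => hjn (by simp [h])
    have hjn1' : j' ≠ p'.1 := fun h => hjn' (by simp [h])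
    have hjn2' : j' ≠ p'.2 := fun h => hjn' (by simp [h])
    have hμj : μ j ≠ 0 := by
      rcases Finset.mem_union.1 hjU with h | h
      exacts [(hAval _ _ h).1, (hAval _ _ h).1]
    have hμj' : μ j' ≠ 0 := by
      rcases Finset.mem_union.1 hjU' with h | h
      exacts [(hAval _ _ h).1, (hAval _ _ h).1]
    have hjj : j = j' := by
      by_contra hnejj
      have hv := DFunLike.congr_fun heq j
      have hL : (Φ p j) j = μ j - 1 := by
        have e1 : (e p.1) j = 0 := by
          simp [he, Finsupp.single_eq_of_ne' (Ne.symm hjn1)]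
        have e2 : (e p.2) j = 0 := by
          simp [he, Finsupp.single_eq_of_ne' (Ne.symm hjn2)]
        have : (Φ p j) j = (μ j - (e j) j) + (e p.1) j + (e p.2) j := by
          simp [hΦ, Finsupp.add_apply, Finsupp.tsub_apply]
        rw [this, e1, e2]
        simp [he, Finsupp.single_eq_same]
      have hR : μ j ≤ (Φ p' j') j := by
        have hR1 : (μ - e j') j = μ j := by
          rw [Finsupp.tsub_apply]
          rw [he]
          rw [Finsupp.single_eq_of_ne' (fun h => hnejj h.symm)]
          omega
        have : (Φ p' j') j = (μ - e j') j + (e p'.1) j + (e p'.2) j := by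
          simp [hΦ, Finsupp.add_apply]
        rw [this, hR1]
        omega
      rw [hL] at hv
      omega
    subst hjj
    have hcan : e p.1 + e p.2 = e p'.1 + e p'.2 := by
      have h1 : μ - e j + (e p.1 + e p.2) = μ - e j + (e p'.1 + e p'.2) := by
        rw [← add_assoc, ← add_assoc]
        exact heq
      exact add_left_cancel h1
    rw [he] at hcan
    rw [Finsupp.single_add_single_eq_single_add_single (one_ne_zero) (one_ne_zero)] at hcan
    rcases hcan with ⟨h1, h2⟩ | ⟨_, h1, h2⟩ | ⟨habs, _, _⟩
    · exact ⟨Prod.ext h1 h2, rfl⟩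
    · have v1 : (p.1 : ℕ) = (p'.2 : ℕ) := congrArg Fin.val h1
      have v2 : (p.2 : ℕ) = (p'.1 : ℕ) := congrArg Fin.val h2
      refine ⟨Prod.ext (Fin.ext ?_) (Fin.ext ?_), rfl⟩ <;> omega
    · exact absurd habs (by norm_num)
  set E := P.biUnion
    (fun p => ((A p.1 ∪ A p.2) \ {p.1, p.2}).image (fun j => (p, j))) with hE
  have hEcard : E.card = ∑ p ∈ P, ((A p.1 ∪ A p.2) \ {p.1, p.2}).card := by
    rw [hE, Finset.card_biUnion]
    · refine Finset.sum_congr rfl fun p _ => ?_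
      apply Finset.card_image_of_injective
      intro a b hab
      exact (Prod.mk.injEq _ _ _ _ ▸ hab).2
    · intro p hp p' hp' hpp'
      rw [Function.onFun, Finset.disjoint_left]
      intro x hx hx'
      obtain ⟨a, _, rfl⟩ := Finset.mem_image.1 hx
      obtain ⟨b, _, hb⟩ := Finset.mem_image.1 hx'
      exact hpp' (congrArg Prod.fst hb).symm
  have hEmem : ∀ x ∈ E, x.1 ∈ P ∧ x.2 ∈ (A x.1.1 ∪ A x.1.2) \ {x.1.1, x.1.2} := by
    intro x hx
    obtain ⟨p, hp, hx2⟩ := Finset.mem_biUnion.1 hx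
    obtain ⟨j, hj, hx3⟩ := Finset.mem_image.1 hx2
    subst hx3
    exact ⟨hp, hj⟩
  have hEle : E.card ≤ ((∑ i, X i) * q).support.card := by
    apply Finset.card_le_card_of_injOn (fun x => Φ x.1 x.2)
    · intro x hx
      obtain ⟨h1, h2⟩ := hEmem x hx
      exact hmem x.1 h1 x.2 h2
    · intro x hx y hy hxy
      obtain ⟨h1, h2⟩ := hEmem x hx
      obtain ⟨h1', h2'⟩ := hEmem y hy
      obtain ⟨hpp, hjj⟩ := hinj x.1 h1 x.2 h2 y.1 h1' y.2 h2' hxy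
      exact Prod.ext hpp hjj
  have hPcard : P.card = n * (n + 1) / 2 := card_pairs n
  have hcomb := comb_bound A hAne hAnot
  rw [← hP] at hcomb
  have hfirst : n * (n + 1) / 2 - 1 ≤ ((∑ i, X i) * q).support.card := by
    calc n * (n + 1) / 2 - 1 = P.card - 1 := by rw [hPcard]
      _ ≤ ∑ p ∈ P, ((A p.1 ∪ A p.2) \ {p.1, p.2}).card := hcomb
      _ = E.card := hEcard.symm
      _ ≤ _ := hEle
  refine ⟨hfirst, ?_⟩
  have hdvd1 : 2 ∣ k₀ * (k₀ + 1) := (Nat.even_mul_succ_self k₀).two_dvd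
  have hdvd2 : 2 ∣ n * (n + 1) := (Nat.even_mul_succ_self n).two_dvd
  have h2a : k₀ * (k₀ + 1) / 2 * 2 = k₀ * (k₀ + 1) := Nat.div_mul_cancel hdvd1
  have h2b : n * (n + 1) / 2 * 2 = n * (n + 1) := Nat.div_mul_cancel hdvd2
  have htn : k₀ + 2 ≤ n := by
    rcases Nat.eq_zero_or_pos k₀ with rfl | hk
    · omega
    · have hkk : k₀ * 2 ≤ k₀ * (k₀ + 1) := Nat.mul_le_mul_left _ (by omega)
      omega
  have hkey : 2 * ((k₀ + 1) * n) + 2 ≤ n * (n + 1) + k₀ * (k₀ + 1) := by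
    have hz : ((k₀ : ℤ) + 2) ≤ (n : ℤ) := by exact_mod_cast htn
    have hnn : (0:ℤ) ≤ ((n:ℤ) - (k₀:ℤ) - 2) * ((n:ℤ) - (k₀:ℤ) + 1) :=
      mul_nonneg (by linarith) (by linarith)
    have hzz : 2 * (((k₀:ℤ) + 1) * (n:ℤ)) + 2 ≤ (n:ℤ) * ((n:ℤ) + 1) + (k₀:ℤ) * ((k₀:ℤ) + 1) := by
      nlinarith
    exact_mod_cast hzz
  omega
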